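/- arXiv:1707.02157 — 2 statements merged into one kernel-verified Lean document; each statement's English description precedes it below -/
import Mathlib

section
/- Let c > 0 and r ≥ 1, and let sinc(x) = sin(x)/x (with sinc(0)=1). Then ∫_0^{π/2} r · sinc²(c·r·sin θ) dθ ≤ 1 + 1/(c²·sin 1). -/
open Real

noncomputable def sinc (x : ℝ) : ℝ := if x = 0 then 1 else Real.sin x / x

lemma sinc_sq_le_one (x : ℝ) : _root_.sinc x ^ 2 ≤ 1 := by
  rcases eq_or_ne x 0 with rfl | h
  · simp [_root_.sinc]
  · rw [_root_.sinc, if_neg h, div_pow, div_le_one (by positivity)]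
    exact Real.sin_sq_le_sq

lemma continuous_sinc : Continuous _root_.sinc := by
  rw [continuous_iff_continuousAt]
  intro x
  rcases eq_or_ne x 0 with rfl | hx
  · have h1 : Filter.Tendsto (fun y : ℝ => Real.sin y / y) (nhdsWithin 0 {(0:ℝ)}ᶜ) (nhds 1) := by
      have h := Real.hasDerivAt_sin 0
      rw [hasDerivAt_iff_tendsto_slope] at h
      rw [Real.cos_zero] at h
      refine h.congr fun y => ?_
      simp [slope_def_field]
    have h2 : Filter.Tendsto _root_.sinc (nhdsWithin 0 {(0:ℝ)}ᶜ) (nhds 1) := by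
      refine h1.congr' ?_
      filter_upwards [self_mem_nhdsWithin] with y hy
      have hy' : y ≠ 0 := hy
      simp [_root_.sinc, hy']
    rw [ContinuousAt]
    have h0 : _root_.sinc 0 = 1 := by simp [_root_.sinc]
    rw [h0, ← nhdsNE_sup_pure 0]
    refine Filter.Tendsto.sup h2 ?_
    simpa [h0] using (Filter.tendsto_pure_pure _root_.sinc 0).mono_right (pure_le_nhds _)
  · have h : ContinuousAt (fun y => Real.sin y / y) x :=
      Real.continuous_sin.continuousAt.div continuousAt_id hx
    refine h.congr ?_
    filter_upwards [isOpen_compl_singleton.mem_nhds hx] with y hy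
    have hy' : y ≠ 0 := hy
    simp [_root_.sinc, hy']

theorem integral_quarter_circle_bound (c r : ℝ) (hc : 0 < c) (hr : 1 ≤ r) :
    (∫ θ in (0 : ℝ)..(π / 2), r * (_root_.sinc (c * r * Real.sin θ)) ^ 2) ≤
      1 + 1 / (c ^ 2 * Real.sin 1) := by
  have hr0 : 0 < r := lt_of_lt_of_le one_pos hr
  set a : ℝ := 1 / r with ha
  have ha0 : 0 < a := by positivity
  have ha1 : a ≤ 1 := by rw [ha]; exact div_le_one_of_le₀ hr hr0.le
  have hpi : (1:ℝ) ≤ π / 2 := by nlinarith [Real.pi_gt_three]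
  have haπ : a ≤ π / 2 := ha1.trans hpi
  have hsin1 : 0 < Real.sin 1 :=
    Real.sin_pos_of_pos_of_lt_pi one_pos (by nlinarith [Real.pi_gt_three])
  set f : ℝ → ℝ := fun θ => r * (_root_.sinc (c * r * Real.sin θ)) ^ 2 with hf
  have hf_cont : Continuous f :=
    continuous_const.mul ((_root_.continuous_sinc.comp (continuous_const.mul Real.continuous_sin)).pow 2)
  have hsin_pos : ∀ θ ∈ Set.Icc a (π / 2), 0 < Real.sin θ := fun θ hθ =>
    Real.sin_pos_of_pos_of_lt_pi (lt_of_lt_of_le ha0 hθ.1)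
      (lt_of_le_of_lt hθ.2 (by nlinarith [Real.pi_pos]))
  have hsplit : (∫ θ in (0:ℝ)..(π/2), f θ) = (∫ θ in (0:ℝ)..a, f θ) + ∫ θ in a..(π/2), f θ :=
    (intervalIntegral.integral_add_adjacent_intervals (hf_cont.intervalIntegrable _ _)
      (hf_cont.intervalIntegrable _ _)).symm
  -- first piece
  have hb1 : (∫ θ in (0:ℝ)..a, f θ) ≤ 1 := by
    have h1 : (∫ θ in (0:ℝ)..a, f θ) ≤ ∫ _ in (0:ℝ)..a, r := by
      refine intervalIntegral.integral_mono_on ha0.le (hf_cont.intervalIntegrable _ _)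
        intervalIntegrable_const ?_
      intro θ _
      calc f θ ≤ r * 1 := mul_le_mul_of_nonneg_left (sinc_sq_le_one _) hr0.le
        _ = r := mul_one r
    have h2 : (∫ _ in (0:ℝ)..a, r) = 1 := by
      rw [intervalIntegral.integral_const, smul_eq_mul, sub_zero, ha]
      field_simp
    linarith
  -- antiderivative computation
  have hint : (∫ θ in a..(π/2), (Real.sin θ ^ 2)⁻¹) = Real.cos a / Real.sin a := by
    have hderiv : ∀ θ ∈ Set.uIcc a (π/2),
        HasDerivAt (fun θ => -Real.cos θ / Real.sin θ) ((Real.sin θ ^ 2)⁻¹) θ := by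
      intro θ hθ
      rw [Set.uIcc_of_le haπ] at hθ
      have hs := hsin_pos θ hθ
      have h1 : HasDerivAt (fun θ => -Real.cos θ) (Real.sin θ) θ := by
        have := (Real.hasDerivAt_cos θ).neg; rwa [neg_neg] at this
      have h2 := h1.div (Real.hasDerivAt_sin θ) hs.ne'
      rw [show Real.sin θ * Real.sin θ - -Real.cos θ * Real.cos θ = 1 by nlinarith [Real.sin_sq_add_cos_sq θ], one_div] at h2
      exact h2
    have hcont : ContinuousOn (fun θ => (Real.sin θ ^ 2)⁻¹) (Set.uIcc a (π/2)) := by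
      rw [Set.uIcc_of_le haπ]
      exact ContinuousOn.inv₀ ((Real.continuous_sin.pow 2).continuousOn)
        (fun θ hθ => by have := hsin_pos θ hθ; positivity)
    rw [intervalIntegral.integral_eq_sub_of_hasDerivAt hderiv hcont.intervalIntegrable]
    simp [Real.cos_pi_div_two, Real.sin_pi_div_two, neg_div]
  -- second piece
  have hb2 : (∫ θ in a..(π/2), f θ) ≤ 1 / (c ^ 2 * Real.sin 1) := by
    have hg_cont : ContinuousOn (fun θ => 1 / (c^2 * r) * (Real.sin θ ^ 2)⁻¹)
        (Set.uIcc a (π/2)) := by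
      rw [Set.uIcc_of_le haπ]
      exact continuousOn_const.mul (ContinuousOn.inv₀ ((Real.continuous_sin.pow 2).continuousOn)
        (fun θ hθ => by have := hsin_pos θ hθ; positivity))
    have hmono : (∫ θ in a..(π/2), f θ) ≤
        ∫ θ in a..(π/2), 1 / (c^2 * r) * (Real.sin θ ^ 2)⁻¹ := by
      refine intervalIntegral.integral_mono_on haπ (hf_cont.intervalIntegrable _ _)
        hg_cont.intervalIntegrable ?_
      intro θ hθ
      have hs := hsin_pos θ hθ
      have hx : c * r * Real.sin θ ≠ 0 := by positivity
      simp only [hf, _root_.sinc, if_neg hx, div_pow]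
      have hnum : (Real.sin (c * r * Real.sin θ)) ^ 2 ≤ 1 := Real.sin_sq_le_one _
      have hxpos : (0:ℝ) < (c * r * Real.sin θ) ^ 2 := by positivity
      have key : r * ((Real.sin (c * r * Real.sin θ)) ^ 2 / (c * r * Real.sin θ) ^ 2) ≤
          r * (1 / (c * r * Real.sin θ) ^ 2) := by
        gcongr
      refine key.trans (le_of_eq ?_)
      field_simp
    have hval : (∫ θ in a..(π/2), 1 / (c^2 * r) * (Real.sin θ ^ 2)⁻¹) =
        1 / (c^2 * r) * (Real.cos a / Real.sin a) := by
      rw [intervalIntegral.integral_const_mul, hint]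
    have hsa : 0 < Real.sin a := hsin_pos a ⟨le_rfl, haπ⟩
    have hsina : a * Real.sin 1 ≤ Real.sin a := by
      have := strictConcaveOn_sin_Icc.concaveOn.2 (x := 0) (y := 1)
        ⟨le_rfl, Real.pi_pos.le⟩ ⟨zero_le_one, by nlinarith [Real.pi_gt_three]⟩
        (sub_nonneg.2 ha1) ha0.le (by ring)
      simpa [smul_eq_mul] using this
    have hfrac : Real.cos a / Real.sin a ≤ r / Real.sin 1 := by
      rw [div_le_div_iff₀ hsa hsin1]
      have hca : Real.cos a ≤ 1 := Real.cos_le_one a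
      have hra : r * a = 1 := by rw [ha]; field_simp
      nlinarith
    have hfinal : 1 / (c^2 * r) * (Real.cos a / Real.sin a) ≤ 1 / (c ^ 2 * Real.sin 1) := by
      have h1 : 1 / (c^2 * r) * (Real.cos a / Real.sin a) ≤ 1 / (c^2 * r) * (r / Real.sin 1) :=
        mul_le_mul_of_nonneg_left hfrac (by positivity)
      refine h1.trans (le_of_eq ?_)
      field_simp
    calc (∫ θ in a..(π/2), f θ) ≤ _ := hmono
      _ = 1 / (c^2 * r) * (Real.cos a / Real.sin a) := hval
      _ ≤ 1 / (c ^ 2 * Real.sin 1) := hfinal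
  rw [hsplit]
  linarith
end

section
/- Fix D > 0, 0 ≤ h < H, set η(h) = 1 − h/H and c_h = π·η(h)·D. Define g_h^x(ξ₁, ξ₂) = 8πi·η(h)·ξ₁·D²·sin²(π·η(h)·D·ξ₁)·sinc(η(h)·D·ξ₁)·sinc(η(h)·D·ξ₂), where sinc(t) = sin(πt)/(πt). Then for every r > 1, the line integral of |g_h^x(ξ)|² over the circle ∂B(0,r) ⊂ ℝ² is bounded above by 256·(D² + 1/(π²·η(h)²·sin 1)), a constant independent of r. -/
open Real Complex Filter Topology

/-- `sinc t = sin (π t) / (π t)`, extended by `sinc 0 = 1`. -/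
noncomputable def sincπ (t : ℝ) : ℝ := if t = 0 then 1 else Real.sin (π * t) / (π * t)

/-- The kernel function `g_h^x`. -/
noncomputable def gkernel (D η : ℝ) (ξ₁ ξ₂ : ℝ) : ℂ :=
  8 * π * Complex.I * η * ξ₁ * D ^ 2 * (Real.sin (π * η * D * ξ₁)) ^ 2 *
    sincπ (η * D * ξ₁) * sincπ (η * D * ξ₂)

@[fun_prop] lemma continuous_sincπ : Continuous sincπ := by
  rw [continuous_iff_continuousAt]
  intro t
  rcases eq_or_ne t 0 with rfl | ht
  · have h1 : Tendsto (fun x : ℝ => Real.sin x / x) (𝓝[≠] (0:ℝ)) (𝓝 1) := by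
      have h := Real.hasDerivAt_sin 0
      rw [hasDerivAt_iff_tendsto_slope] at h
      rw [Real.cos_zero] at h
      refine h.congr' ?_
      filter_upwards [self_mem_nhdsWithin] with x hx
      simp [slope_def_field, Real.sin_zero]
    have h2 : Tendsto (fun x : ℝ => π * x) (𝓝[≠] (0:ℝ)) (𝓝[≠] (0:ℝ)) := by
      apply tendsto_nhdsWithin_of_tendsto_nhds_of_eventually_within
      · simpa using ((continuous_mul_left π).tendsto (0:ℝ)).mono_left nhdsWithin_le_nhds
      · filter_upwards [self_mem_nhdsWithin] with x hx
        exact mul_ne_zero (ne_of_gt Real.pi_pos) hx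
    have h3 : Tendsto sincπ (𝓝[≠] (0:ℝ)) (𝓝 1) := by
      refine (h1.comp h2).congr' ?_
      filter_upwards [self_mem_nhdsWithin] with x hx
      simp only [Set.mem_compl_iff, Set.mem_singleton_iff] at hx
      simp [sincπ, hx, Function.comp]
    have : ContinuousAt sincπ 0 := by
      unfold ContinuousAt
      have : sincπ 0 = 1 := by simp [sincπ]
      rw [this, ← nhdsNE_sup_pure 0]
      rw [tendsto_sup]
      exact ⟨h3, by simpa [this] using tendsto_pure_nhds sincπ 0⟩
    exact this
  · have : ∀ᶠ x in 𝓝 t, sincπ x = Real.sin (π * x) / (π * x) := by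
      filter_upwards [isOpen_ne.mem_nhds ht] with x hx
      simp [sincπ, hx]
    refine ContinuousAt.congr ?_ (Filter.EventuallyEq.symm this)
    exact (Real.continuous_sin.comp (continuous_const.mul continuous_id)).continuousAt.div
      ((continuous_const.mul continuous_id).continuousAt)
      (mul_ne_zero (ne_of_gt Real.pi_pos) ht)


lemma abs_sincπ_le_one (t : ℝ) : |sincπ t| ≤ 1 := by
  rcases eq_or_ne t 0 with rfl | ht
  · simp [sincπ]
  · have hπt : π * t ≠ 0 := mul_ne_zero (ne_of_gt Real.pi_pos) ht
    rw [sincπ, if_neg ht, abs_div, div_le_one (abs_pos.2 hπt)]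
    exact Real.abs_sin_le_abs

lemma abs_sincπ_le_inv (t : ℝ) (ht : t ≠ 0) : |sincπ t| ≤ 1 / (π * |t|) := by
  have hπt : π * t ≠ 0 := mul_ne_zero (ne_of_gt Real.pi_pos) ht
  have h1 : |Real.sin (π * t)| ≤ 1 := abs_le.mpr ⟨Real.neg_one_le_sin _, Real.sin_le_one _⟩
  rw [sincπ, if_neg ht, abs_div, abs_mul, abs_of_pos Real.pi_pos]
  gcongr

lemma key1 (D η ξ₁ : ℝ) (hD : 0 < D) : |η * ξ₁ * sincπ (η * D * ξ₁)| ≤ 1 / (π * D) := by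
  rcases eq_or_ne (η * D * ξ₁) 0 with h | h
  · have : η * ξ₁ * sincπ (η * D * ξ₁) = 0 := by
      rcases mul_eq_zero.1 h with h' | h'
      · rcases mul_eq_zero.1 h' with h'' | h''
        · simp [h'']
        · exact absurd h'' hD.ne'
      · simp [h']
    rw [this, abs_zero]
    positivity
  · have hη : η ≠ 0 := fun e => h (by simp [e])
    have hξ : ξ₁ ≠ 0 := fun e => h (by simp [e])
    rw [sincπ, if_neg h]
    have : η * ξ₁ * (Real.sin (π * (η * D * ξ₁)) / (π * (η * D * ξ₁)))
        = Real.sin (π * (η * D * ξ₁)) / (π * D) := by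
      field_simp
    rw [this, abs_div, abs_of_pos (by positivity : (0:ℝ) < π * D)]
    have h1 : |Real.sin (π * (η * D * ξ₁))| ≤ 1 :=
      abs_le.mpr ⟨Real.neg_one_le_sin _, Real.sin_le_one _⟩
    have h2 : (0:ℝ) < π * D := by positivity
    calc |Real.sin (π * (η * D * ξ₁))| / (π * D) ≤ 1 / (π * D) := by gcongr
      _ = 1 / (π * D) := rfl

lemma gkernel_abs_le (D η ξ₁ ξ₂ : ℝ) (hD : 0 < D) :
    ‖gkernel D η ξ₁ ξ₂‖ ≤ 8 * D * |sincπ (η * D * ξ₂)| := by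
  have hg : gkernel D η ξ₁ ξ₂ = Complex.I *
      ((8 * π * D ^ 2 * (Real.sin (π * η * D * ξ₁)) ^ 2 *
        (η * ξ₁ * sincπ (η * D * ξ₁)) * sincπ (η * D * ξ₂) : ℝ) : ℂ) := by
    unfold gkernel; push_cast; ring
  rw [hg, norm_mul, Complex.norm_I, one_mul, Complex.norm_real, Real.norm_eq_abs, abs_mul, abs_mul]
  have hA : |8 * π * D ^ 2 * Real.sin (π * η * D * ξ₁) ^ 2| ≤ 8 * π * D ^ 2 := by
    rw [abs_mul, _root_.abs_of_nonneg (by positivity : (0:ℝ) ≤ 8*π*D^2),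
      _root_.abs_of_nonneg (sq_nonneg _)]
    exact mul_le_of_le_one_right (by positivity) (Real.sin_sq_le_one _)
  have hB := key1 D η ξ₁ hD
  calc |8 * π * D ^ 2 * Real.sin (π * η * D * ξ₁) ^ 2| * |η * ξ₁ * sincπ (η * D * ξ₁)| *
        |sincπ (η * D * ξ₂)|
      ≤ (8 * π * D ^ 2) * (1 / (π * D)) * |sincπ (η * D * ξ₂)| := by
        gcongr <;> positivity
    _ = 8 * D * |sincπ (η * D * ξ₂)| := by field_simp

lemma gkernel_sq_le_const (D η ξ₁ ξ₂ : ℝ) (hD : 0 < D) :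
    (‖gkernel D η ξ₁ ξ₂‖) ^ 2 ≤ 64 * D ^ 2 := by
  have h := (gkernel_abs_le D η ξ₁ ξ₂ hD).trans
    (by nlinarith [abs_sincπ_le_one (η * D * ξ₂)] : 8 * D * |sincπ (η * D * ξ₂)| ≤ 8 * D)
  nlinarith [norm_nonneg (gkernel D η ξ₁ ξ₂)]

lemma gkernel_sq_le (D η ξ₁ ξ₂ : ℝ) (hD : 0 < D) (hη : 0 < η) (hξ₂ : ξ₂ ≠ 0) :
    (‖gkernel D η ξ₁ ξ₂‖) ^ 2 ≤ 64 / (π ^ 2 * η ^ 2 * ξ₂ ^ 2) := by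
  have h2 : |sincπ (η * D * ξ₂)| ≤ 1 / (π * (η * D * |ξ₂|)) := by
    have := abs_sincπ_le_inv (η * D * ξ₂) (by positivity)
    rwa [abs_mul, abs_mul, abs_of_pos hη, abs_of_pos hD] at this
  have h3 : (0:ℝ) < |ξ₂| := abs_pos.2 hξ₂
  have hstep : 8 * D * |sincπ (η * D * ξ₂)| ≤ 8 / (π * η * |ξ₂|) := by
    refine le_trans (mul_le_mul_of_nonneg_left h2 (by positivity)) (le_of_eq ?_)
    field_simp
  have h := (gkernel_abs_le D η ξ₁ ξ₂ hD).trans hstep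
  have h4 : ‖gkernel D η ξ₁ ξ₂‖ ^ 2 ≤ (8 / (π * η * |ξ₂|)) ^ 2 := by
    have := norm_nonneg (gkernel D η ξ₁ ξ₂)
    nlinarith
  calc ‖gkernel D η ξ₁ ξ₂‖ ^ 2 ≤ (8 / (π * η * |ξ₂|)) ^ 2 := h4
    _ = 64 / (π ^ 2 * η ^ 2 * ξ₂ ^ 2) := by
        rw [div_pow, mul_pow, mul_pow, _root_.sq_abs ξ₂]; norm_num

lemma integral_csc_sq (a b : ℝ) (hs : ∀ x ∈ Set.uIcc a b, Real.sin x ≠ 0) :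
    ∫ x in a..b, 1 / (Real.sin x) ^ 2 =
      Real.cos a / Real.sin a - Real.cos b / Real.sin b := by
  have hderiv : ∀ x ∈ Set.uIcc a b,
      HasDerivAt (fun y => -(Real.cos y / Real.sin y)) (1 / (Real.sin x) ^ 2) x := by
    intro x hx
    have hsx := hs x hx
    have h : HasDerivAt (fun y => -(Real.cos y / Real.sin y)) _ x :=
      ((Real.hasDerivAt_cos x).div (Real.hasDerivAt_sin x) hsx).neg
    convert h using 1
    rw [← neg_div]; congr 1
    nlinarith [Real.sin_sq_add_cos_sq x]
  have hint : IntervalIntegrable (fun x => 1 / (Real.sin x) ^ 2) MeasureTheory.volume a b := by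
    apply ContinuousOn.intervalIntegrable
    exact ContinuousOn.div continuousOn_const
      ((Real.continuous_sin.continuousOn).pow 2) (fun x hx => pow_ne_zero 2 (hs x hx))
  rw [intervalIntegral.integral_eq_sub_of_hasDerivAt hderiv hint]
  ring

lemma sin_ge_lin {x : ℝ} (h0 : 0 ≤ x) (h1 : x ≤ 1) : x * Real.sin 1 ≤ Real.sin x := by
  have hconc := strictConcaveOn_sin_Icc.concaveOn
  have h := hconc.2 (Set.mem_Icc.2 ⟨le_refl 0, Real.pi_pos.le⟩)
    (Set.mem_Icc.2 ⟨zero_le_one, by linarith [Real.pi_gt_three]⟩)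
    (by linarith : (0:ℝ) ≤ 1 - x) h0 (by ring)
  simpa using h

/-- The arc-length integral of `|g_h^x|²` over the circle of radius `r` is bounded
by a constant independent of `r`. -/
theorem gkernel_circle_integral_bound (D H h : ℝ) (hD : 0 < D) (hH : 0 < H)
    (hh : 0 ≤ h) (hhH : h < H) (r : ℝ) (hr : 1 < r) :
    (∫ θ in (0 : ℝ)..(2 * π),
        r * (‖gkernel D (1 - h / H) (r * Real.cos θ) (r * Real.sin θ)‖) ^ 2) ≤
      256 * (D ^ 2 + 1 / (π ^ 2 * (1 - h / H) ^ 2 * Real.sin 1)) := by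
  have hπ := Real.pi_pos
  have hπ3 := Real.pi_gt_three
  set η : ℝ := 1 - h / H with hηdef
  have hη : 0 < η := by
    have : h / H < 1 := (div_lt_one hH).2 hhH
    rw [hηdef]; linarith
  have hr0 : (0:ℝ) < r := by linarith
  set s : ℝ := 1 / r with hsdef
  have hs0 : 0 < s := by positivity
  have hs1 : s < 1 := by rw [hsdef, div_lt_one hr0]; exact hr
  have hsr : s * r = 1 := by rw [hsdef]; field_simp
  have hsin1 : 0 < Real.sin 1 := Real.sin_pos_of_pos_of_lt_pi one_pos (by linarith)
  set f : ℝ → ℝ := fun θ =>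
    r * (‖gkernel D η (r * Real.cos θ) (r * Real.sin θ)‖) ^ 2 with hfdef
  have hcont : Continuous f := by
    rw [hfdef]; unfold gkernel
    apply Continuous.mul continuous_const
    apply Continuous.pow
    apply continuous_norm.comp
    fun_prop
  have I : ∀ a b : ℝ, IntervalIntegrable f MeasureTheory.volume a b :=
    fun a b => hcont.intervalIntegrable a b
  have hb1 : ∀ θ : ℝ, f θ ≤ 64 * D ^ 2 * r := by
    intro θ
    have h1 := gkernel_sq_le_const D η (r * Real.cos θ) (r * Real.sin θ) hD
    calc f θ ≤ r * (64 * D ^ 2) := by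
          simp only [hfdef]; exact mul_le_mul_of_nonneg_left h1 hr0.le
      _ = 64 * D ^ 2 * r := by ring
  have hb2 : ∀ θ : ℝ, Real.sin θ ≠ 0 →
      f θ ≤ 64 / (π ^ 2 * η ^ 2 * r) * (1 / (Real.sin θ) ^ 2) := by
    intro θ hθ
    have hne : r * Real.sin θ ≠ 0 := mul_ne_zero hr0.ne' hθ
    have h1 := gkernel_sq_le D η (r * Real.cos θ) (r * Real.sin θ) hD hη hne
    calc f θ ≤ r * (64 / (π ^ 2 * η ^ 2 * (r * Real.sin θ) ^ 2)) := by
          simp only [hfdef]; exact mul_le_mul_of_nonneg_left h1 hr0.le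
      _ = 64 / (π ^ 2 * η ^ 2 * r) * (1 / (Real.sin θ) ^ 2) := by
          field_simp
  have hsplit : (∫ θ in (0:ℝ)..(2*π), f θ)
      = (∫ θ in (0:ℝ)..s, f θ) + (∫ θ in s..(π - s), f θ)
        + (∫ θ in (π - s)..(π + s), f θ) + (∫ θ in (π + s)..(2*π - s), f θ)
        + (∫ θ in (2*π - s)..(2*π), f θ) := by
    rw [intervalIntegral.integral_add_adjacent_intervals (I 0 s) (I s (π - s)),
        intervalIntegral.integral_add_adjacent_intervals (I 0 (π - s)) (I (π - s) (π + s)),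
        intervalIntegral.integral_add_adjacent_intervals (I 0 (π + s)) (I (π + s) (2*π - s)),
        intervalIntegral.integral_add_adjacent_intervals (I 0 (2*π - s)) (I (2*π - s) (2*π))]
  have small : ∀ a b : ℝ, a ≤ b → (∫ θ in a..b, f θ) ≤ (b - a) * (64 * D ^ 2 * r) := by
    intro a b hab
    have h1 := intervalIntegral.integral_mono_on hab (I a b)
      (intervalIntegrable_const) (fun x _ => hb1 x)
    rwa [intervalIntegral.integral_const, smul_eq_mul] at h1
  -- cotangent bound
  have hsinS : Real.sin 1 / r ≤ Real.sin s := by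
    have h1 := sin_ge_lin hs0.le hs1.le
    calc Real.sin 1 / r = s * Real.sin 1 := by rw [hsdef]; ring
      _ ≤ Real.sin s := h1
  have hsins_pos : 0 < Real.sin s := lt_of_lt_of_le (by positivity) hsinS
  have hcot : Real.cos s / Real.sin s ≤ r / Real.sin 1 := by
    rw [div_le_div_iff₀ hsins_pos hsin1]
    have h2 : Real.sin 1 ≤ r * Real.sin s := by
      calc Real.sin 1 = r * (Real.sin 1 / r) := by field_simp
        _ ≤ r * Real.sin s := by gcongr
    nlinarith [Real.cos_le_one s, hsin1]
  have hC : (0:ℝ) ≤ 64 / (π ^ 2 * η ^ 2 * r) := by positivity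
  -- first big interval
  have hsin_mid : ∀ x ∈ Set.uIcc s (π - s), Real.sin x ≠ 0 := by
    intro x hx
    rw [Set.uIcc_of_le (by linarith : s ≤ π - s)] at hx
    exact (Real.sin_pos_of_pos_of_lt_pi (by linarith [hx.1]) (by linarith [hx.2])).ne'
  have hint_mid : IntervalIntegrable
      (fun x => 64 / (π ^ 2 * η ^ 2 * r) * (1 / (Real.sin x) ^ 2))
      MeasureTheory.volume s (π - s) := by
    apply ContinuousOn.intervalIntegrable
    exact ContinuousOn.mul continuousOn_const
      (ContinuousOn.div continuousOn_const ((Real.continuous_sin.continuousOn).pow 2)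
        (fun x hx => pow_ne_zero 2 (hsin_mid x hx)))
  have big1 : (∫ θ in s..(π - s), f θ) ≤ 128 / (π ^ 2 * η ^ 2 * Real.sin 1) := by
    have hmono := intervalIntegral.integral_mono_on (by linarith : s ≤ π - s)
      (I s (π - s)) hint_mid
      (fun x hx => hb2 x (hsin_mid x (by rwa [Set.uIcc_of_le (by linarith : s ≤ π - s)])))
    calc (∫ θ in s..(π - s), f θ)
        ≤ ∫ θ in s..(π - s), 64 / (π ^ 2 * η ^ 2 * r) * (1 / (Real.sin θ) ^ 2) := hmono
      _ = 64 / (π ^ 2 * η ^ 2 * r) * ∫ θ in s..(π - s), 1 / (Real.sin θ) ^ 2 := by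
          rw [intervalIntegral.integral_const_mul]
      _ = 64 / (π ^ 2 * η ^ 2 * r) *
          (Real.cos s / Real.sin s - Real.cos (π - s) / Real.sin (π - s)) := by
          rw [integral_csc_sq _ _ hsin_mid]
      _ = 64 / (π ^ 2 * η ^ 2 * r) * (2 * (Real.cos s / Real.sin s)) := by
          rw [Real.cos_pi_sub, Real.sin_pi_sub]; ring
      _ ≤ 64 / (π ^ 2 * η ^ 2 * r) * (2 * (r / Real.sin 1)) := by gcongr
      _ = 128 / (π ^ 2 * η ^ 2 * Real.sin 1) := by field_simp; ring
  -- second big interval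
  have hsin_mid2 : ∀ x ∈ Set.uIcc (π + s) (2*π - s), Real.sin x ≠ 0 := by
    intro x hx
    rw [Set.uIcc_of_le (by linarith : π + s ≤ 2*π - s)] at hx
    have h1 : 0 < Real.sin (x - π) :=
      Real.sin_pos_of_pos_of_lt_pi (by linarith [hx.1]) (by linarith [hx.2])
    rw [Real.sin_sub_pi] at h1
    exact fun e => by rw [e] at h1; simp at h1
  have hint_mid2 : IntervalIntegrable
      (fun x => 64 / (π ^ 2 * η ^ 2 * r) * (1 / (Real.sin x) ^ 2))
      MeasureTheory.volume (π + s) (2*π - s) := by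
    apply ContinuousOn.intervalIntegrable
    exact ContinuousOn.mul continuousOn_const
      (ContinuousOn.div continuousOn_const ((Real.continuous_sin.continuousOn).pow 2)
        (fun x hx => pow_ne_zero 2 (hsin_mid2 x hx)))
  have big2 : (∫ θ in (π + s)..(2*π - s), f θ) ≤ 128 / (π ^ 2 * η ^ 2 * Real.sin 1) := by
    have hmono := intervalIntegral.integral_mono_on (by linarith : π + s ≤ 2*π - s)
      (I (π + s) (2*π - s)) hint_mid2
      (fun x hx => hb2 x (hsin_mid2 x (by rwa [Set.uIcc_of_le (by linarith : π + s ≤ 2*π - s)])))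
    have e1 : Real.cos (π + s) = -Real.cos s := by simp [Real.cos_add]
    have e2 : Real.sin (π + s) = -Real.sin s := by simp [Real.sin_add]
    have e3 : Real.cos (2*π - s) = Real.cos s := by
      simp [Real.cos_sub, Real.cos_two_pi, Real.sin_two_pi]
    have e4 : Real.sin (2*π - s) = -Real.sin s := by
      simp [Real.sin_sub, Real.cos_two_pi, Real.sin_two_pi]
    calc (∫ θ in (π + s)..(2*π - s), f θ)
        ≤ ∫ θ in (π + s)..(2*π - s), 64 / (π ^ 2 * η ^ 2 * r) * (1 / (Real.sin θ) ^ 2) := hmono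
      _ = 64 / (π ^ 2 * η ^ 2 * r) * ∫ θ in (π + s)..(2*π - s), 1 / (Real.sin θ) ^ 2 := by
          rw [intervalIntegral.integral_const_mul]
      _ = 64 / (π ^ 2 * η ^ 2 * r) *
          (Real.cos (π + s) / Real.sin (π + s) - Real.cos (2*π - s) / Real.sin (2*π - s)) := by
          rw [integral_csc_sq _ _ hsin_mid2]
      _ = 64 / (π ^ 2 * η ^ 2 * r) * (2 * (Real.cos s / Real.sin s)) := by
          rw [e1, e2, e3, e4, neg_div_neg_eq, div_neg]; ring
      _ ≤ 64 / (π ^ 2 * η ^ 2 * r) * (2 * (r / Real.sin 1)) := by gcongr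
      _ = 128 / (π ^ 2 * η ^ 2 * Real.sin 1) := by field_simp; ring
  -- small pieces
  have hA : (∫ θ in (0:ℝ)..s, f θ) ≤ 64 * D ^ 2 := by
    have h1 := small 0 s hs0.le
    calc (∫ θ in (0:ℝ)..s, f θ) ≤ (s - 0) * (64 * D ^ 2 * r) := h1
      _ = 64 * D ^ 2 * (s * r) := by ring
      _ = 64 * D ^ 2 := by rw [hsr, mul_one]
  have hCmid : (∫ θ in (π - s)..(π + s), f θ) ≤ 128 * D ^ 2 := by
    have h1 := small (π - s) (π + s) (by linarith)
    calc (∫ θ in (π - s)..(π + s), f θ) ≤ (π + s - (π - s)) * (64 * D ^ 2 * r) := h1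
      _ = 128 * D ^ 2 * (s * r) := by ring
      _ = 128 * D ^ 2 := by rw [hsr, mul_one]
  have hE : (∫ θ in (2*π - s)..(2*π), f θ) ≤ 64 * D ^ 2 := by
    have h1 := small (2*π - s) (2*π) (by linarith)
    calc (∫ θ in (2*π - s)..(2*π), f θ) ≤ (2*π - (2*π - s)) * (64 * D ^ 2 * r) := h1
      _ = 64 * D ^ 2 * (s * r) := by ring
      _ = 64 * D ^ 2 := by rw [hsr, mul_one]
  have hRHS : 256 * (D ^ 2 + 1 / (π ^ 2 * η ^ 2 * Real.sin 1))
      = 256 * D ^ 2 + 256 / (π ^ 2 * η ^ 2 * Real.sin 1) := by ring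
  rw [hsplit, hRHS]
  have hsum := add_le_add (add_le_add (add_le_add (add_le_add hA big1) hCmid) big2) hE
  refine hsum.trans (le_of_eq ?_)
  ring
end
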